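/- For the three-component perturbation family of the convexity lemma, the endpoint values satisfy g(0) = J((π_1+π_2, π_3), ((π_1 p_1 + π_2 p_2)/(π_1+π_2), p_3)) and g(1) = J((π_1, π_2+π_3), (p_1, (π_2 p_2 + π_3 p_3)/(π_2+π_3))), and both g(0) ≤ J(π,p) and g(1) ≤ J(π,p). -/

import Mathlib

open MeasureTheory Real

noncomputable def entropy (f : ℝ → ℝ) : ℝ := -∫ x, f x * Real.log (f x)

lemma entropy_eq (f : ℝ → ℝ) : entropy f = ∫ x, Real.negMulLog (f x) := by
  simp [entropy, Real.negMulLog_eq_neg, integral_neg]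

lemma merge_ge (a b : ℝ) (ha : 0 < a) (hb : 0 < b) (p q : ℝ → ℝ)
    (hp : ∀ x, 0 ≤ p x) (hq : ∀ x, 0 ≤ q x)
    (hip : Integrable (fun x => p x * Real.log (p x)))
    (hiq : Integrable (fun x => q x * Real.log (q x)))
    (him : Integrable (fun x => ((a * p x + b * q x) / (a + b))
      * Real.log ((a * p x + b * q x) / (a + b)))) :
    a * entropy p + b * entropy q
      ≤ (a + b) * entropy (fun x => (a * p x + b * q x) / (a + b)) := by
  have hab : 0 < a + b := by linarith
  have key : ∀ x, a * Real.negMulLog (p x) + b * Real.negMulLog (q x)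
      ≤ (a + b) * Real.negMulLog ((a * p x + b * q x) / (a + b)) := by
    intro x
    have hc := Real.concaveOn_negMulLog.2 (Set.mem_Ici.2 (hp x)) (Set.mem_Ici.2 (hq x))
      (le_of_lt (div_pos ha hab)) (le_of_lt (div_pos hb hab))
      (by field_simp)
    have harg : (a / (a + b)) • p x + (b / (a + b)) • q x
        = (a * p x + b * q x) / (a + b) := by
      simp only [smul_eq_mul]; field_simp
    rw [harg] at hc
    have := mul_le_mul_of_nonneg_left hc (le_of_lt hab)
    calc a * Real.negMulLog (p x) + b * Real.negMulLog (q x)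
        = (a + b) * ((a / (a + b)) • Real.negMulLog (p x)
            + (b / (a + b)) • Real.negMulLog (q x)) := by
          simp only [smul_eq_mul]; field_simp
      _ ≤ _ := this
  have I1 : Integrable (fun x => a * Real.negMulLog (p x) + b * Real.negMulLog (q x)) := by
    have := (hip.neg.const_mul a).add (hiq.neg.const_mul b)
    simpa [Real.negMulLog_eq_neg, mul_comm, Pi.add_def] using this
  have I2 : Integrable (fun x => (a + b) * Real.negMulLog ((a * p x + b * q x) / (a + b))) := by
    have := him.neg.const_mul (a + b)
    simpa [Real.negMulLog_eq_neg] using this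
  have hmono := integral_mono I1 I2 key
  rw [entropy_eq, entropy_eq, entropy_eq]
  calc a * (∫ x, Real.negMulLog (p x)) + b * (∫ x, Real.negMulLog (q x))
      = ∫ x, (a * Real.negMulLog (p x) + b * Real.negMulLog (q x)) := by
        rw [integral_add (hip.neg.const_mul a |>.congr ?_ ) (hiq.neg.const_mul b |>.congr ?_),
          integral_const_mul, integral_const_mul]
        · exact Filter.Eventually.of_forall fun x => by simp [Real.negMulLog_eq_neg]
        · exact Filter.Eventually.of_forall fun x => by simp [Real.negMulLog_eq_neg]
    _ ≤ ∫ x, (a + b) * Real.negMulLog ((a * p x + b * q x) / (a + b)) := hmono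
    _ = (a + b) * ∫ x, Real.negMulLog ((a * p x + b * q x) / (a + b)) := integral_const_mul _ _

noncomputable def p12t (w1 w2 : ℝ) (p1 p2 : ℝ → ℝ) (t : ℝ) : ℝ → ℝ :=
  fun x => (w1 * p1 x + (1 - t) * w2 * p2 x) / (w1 + (1 - t) * w2)

noncomputable def p23t (w2 w3 : ℝ) (p2 p3 : ℝ → ℝ) (t : ℝ) : ℝ → ℝ :=
  fun x => (t * w2 * p2 x + w3 * p3 x) / (t * w2 + w3)

noncomputable def g (w1 w2 w3 : ℝ) (p1 p2 p3 : ℝ → ℝ) (t : ℝ) : ℝ :=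
  entropy (fun x => w1 * p1 x + w2 * p2 x + w3 * p3 x)
    - ((w1 + (1 - t) * w2) * entropy (p12t w1 w2 p1 p2 t)
       + (t * w2 + w3) * entropy (p23t w2 w3 p2 p3 t))

/-- Endpoint values of the perturbation path are merged-mixture divergences,
and both are dominated by the Jensen–Shannon divergence of the original
three-component mixture. -/
theorem g_endpoints
    (w1 w2 w3 : ℝ) (h1 : 0 < w1) (h2 : 0 < w2) (h3 : 0 < w3)
    (h1' : w1 ≤ 1) (h2' : w2 ≤ 1) (h3' : w3 ≤ 1)
    (hsum : w1 + w2 + w3 = 1)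
    (p1 p2 p3 : ℝ → ℝ)
    (hp1 : ∀ x, 0 ≤ p1 x) (hp2 : ∀ x, 0 ≤ p2 x) (hp3 : ∀ x, 0 ≤ p3 x)
    (hi1 : ∫ x, p1 x = 1) (hi2 : ∫ x, p2 x = 1) (hi3 : ∫ x, p3 x = 1)
    (hent1 : Integrable (fun x => p1 x * Real.log (p1 x)))
    (hent2 : Integrable (fun x => p2 x * Real.log (p2 x)))
    (hent3 : Integrable (fun x => p3 x * Real.log (p3 x)))
    (hmix : Integrable (fun x => (w1 * p1 x + w2 * p2 x + w3 * p3 x)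
        * Real.log (w1 * p1 x + w2 * p2 x + w3 * p3 x)))
    (hent12 : Integrable (fun x => ((w1 * p1 x + w2 * p2 x) / (w1 + w2))
        * Real.log ((w1 * p1 x + w2 * p2 x) / (w1 + w2))))
    (hent23 : Integrable (fun x => ((w2 * p2 x + w3 * p3 x) / (w2 + w3))
        * Real.log ((w2 * p2 x + w3 * p3 x) / (w2 + w3)))) :
    g w1 w2 w3 p1 p2 p3 0
        = entropy (fun x => w1 * p1 x + w2 * p2 x + w3 * p3 x)
          - ((w1 + w2) * entropy (fun x => (w1 * p1 x + w2 * p2 x) / (w1 + w2))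
             + w3 * entropy p3) ∧
      g w1 w2 w3 p1 p2 p3 1
        = entropy (fun x => w1 * p1 x + w2 * p2 x + w3 * p3 x)
          - (w1 * entropy p1
             + (w2 + w3) * entropy (fun x => (w2 * p2 x + w3 * p3 x) / (w2 + w3))) ∧
      g w1 w2 w3 p1 p2 p3 0
        ≤ entropy (fun x => w1 * p1 x + w2 * p2 x + w3 * p3 x)
          - (w1 * entropy p1 + w2 * entropy p2 + w3 * entropy p3) ∧
      g w1 w2 w3 p1 p2 p3 1
        ≤ entropy (fun x => w1 * p1 x + w2 * p2 x + w3 * p3 x)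
          - (w1 * entropy p1 + w2 * entropy p2 + w3 * entropy p3) := by
  have e12_0 : p12t w1 w2 p1 p2 0 = fun x => (w1 * p1 x + w2 * p2 x) / (w1 + w2) := by
    funext x; simp [p12t]
  have e23_0 : p23t w2 w3 p2 p3 0 = p3 := by
    funext x; simp [p23t, h3.ne']
  have e12_1 : p12t w1 w2 p1 p2 1 = p1 := by
    funext x; simp [p12t, h1.ne']
  have e23_1 : p23t w2 w3 p2 p3 1 = fun x => (w2 * p2 x + w3 * p3 x) / (w2 + w3) := by
    funext x; simp [p23t]
  have eq0 : g w1 w2 w3 p1 p2 p3 0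
      = entropy (fun x => w1 * p1 x + w2 * p2 x + w3 * p3 x)
        - ((w1 + w2) * entropy (fun x => (w1 * p1 x + w2 * p2 x) / (w1 + w2))
           + w3 * entropy p3) := by
    rw [g, e12_0, e23_0]; norm_num
  have eq1 : g w1 w2 w3 p1 p2 p3 1
      = entropy (fun x => w1 * p1 x + w2 * p2 x + w3 * p3 x)
        - (w1 * entropy p1
           + (w2 + w3) * entropy (fun x => (w2 * p2 x + w3 * p3 x) / (w2 + w3))) := by
    rw [g, e12_1, e23_1]; norm_num
  have m12 := merge_ge w1 w2 h1 h2 p1 p2 hp1 hp2 hent1 hent2 hent12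
  have m23 := merge_ge w2 w3 h2 h3 p2 p3 hp2 hp3 hent2 hent3 hent23
  exact ⟨eq0, eq1, by rw [eq0]; linarith, by rw [eq1]; linarith⟩
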